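/- Let m be a positive integer or half-integer (2m ∈ ℕ), s ∈ (1/2)ℤ, and n a positive integer. Let τ lie in the upper half-plane and z₁, z₂ ∈ ℂ with z₁ ∉ ℤ + ℤτ. Then for either choice of sign: (1) Φ₁^{(±)[m,s+n]}(τ, z₁, z₂) = Φ₁^{(±)[m,s]}(τ, z₁, z₂) − ∑_{j=0}^{n−1} e^{πi(s+j)(z₁−z₂)} q^{−(s+j)²/(4m)} θ^{(±)}_{s+j,m}(τ, z₁+z₂); and (2) Φ₁^{(±)[m,s−n]}(τ, z₁, z₂) = Φ₁^{(±)[m,s]}(τ, z₁, z₂) + ∑_{j=1}^{n} e^{πi(s−j)(z₁−z₂)} q^{−(s−j)²/(4m)} θ^{(±)}_{s−j,m}(τ, z₁+z₂). -/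

import Mathlib

noncomputable section

open Complex

/-- `e2 w = exp (2 π i w)`; with `q = e^{2πiτ}`, the power `q^x` corresponds to `e2 (x * τ)`. -/
def e2 (w : ℂ) : ℂ := Complex.exp (2 * (Real.pi : ℂ) * Complex.I * w)

/-- Jacobi-type theta function `θ^{(ε)}_{n,m}(τ, z) = ∑_{j∈ℤ} ε^j q^{m(j+n/(2m))²} e^{2πim(j+n/(2m))z}`. -/
def jtheta (ε n m τ z : ℂ) : ℂ :=
  ∑' j : ℤ, ε ^ j *
    e2 (m * ((j : ℂ) + n / (2 * m)) ^ 2 * τ + m * ((j : ℂ) + n / (2 * m)) * z)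

/-- Mock theta function `Φ₁^{(ε)[m,s]}(τ, z₁, z₂)`. -/
def Phi1 (ε m s τ z₁ z₂ : ℂ) : ℂ :=
  ∑' j : ℤ, ε ^ j *
    e2 (m * (j : ℂ) * (z₁ + z₂) + s * z₁ + (m * (j : ℂ) ^ 2 + s * (j : ℂ)) * τ) /
      (1 - e2 (z₁ + (j : ℂ) * τ))

/-- Dedekind eta function `η(τ) = q^{1/24} ∏_{k≥1} (1 - q^k)`. -/
def dedekindEta (τ : ℂ) : ℂ := e2 (τ / 24) * ∏' k : ℕ, (1 - e2 (((k : ℂ) + 1) * τ))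

/-- Jacobi theta `ϑ₁₁(τ, z) = i ∑_{j∈ℤ} (−1)^j q^{(j+1/2)²/2} e^{2πi(j+1/2)z}`. -/
def theta11 (τ z : ℂ) : ℂ :=
  Complex.I * ∑' j : ℤ, (-1 : ℂ) ^ j *
    e2 (((j : ℂ) + 1 / 2) ^ 2 / 2 * τ + ((j : ℂ) + 1 / 2) * z)

/-- Indefinite double sum `(∑_{j,p∈ℤ, 0<p≤j} − ∑_{j,p∈ℤ, j<p≤0}) f j p`. -/
def indefSum (f : ℤ → ℤ → ℂ) : ℂ :=
  ∑' jp : ℤ × ℤ,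
    ((if 0 < jp.2 ∧ jp.2 ≤ jp.1 then f jp.1 jp.2 else 0) -
      (if jp.1 < jp.2 ∧ jp.2 ≤ 0 then f jp.1 jp.2 else 0))

/-- `g^{[m]}_{n,ν}(τ)`. -/
def gfun (m : ℂ) (n ν : ℤ) (τ : ℂ) : ℂ :=
  indefSum fun j p =>
    (-1 : ℂ) ^ j *
      e2 (((m + 1 / 2) * ((j : ℂ) + (ν : ℂ) - ((ν : ℂ) + 1 / 2) / (2 * m + 1)) ^ 2 -
        m * ((p : ℂ) + (ν : ℂ) - (n : ℂ) / (2 * m)) ^ 2) * τ)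

/-- `h^{[m]}_{n,ν}(τ, z)`. -/
def hfun (m : ℂ) (n ν : ℤ) (τ z : ℂ) : ℂ :=
  ∑' j : ℤ,
    e2 (m * (j : ℂ) * z + (n : ℂ) * z / 2 +
        (m * (j : ℂ) ^ 2 + (n : ℂ) * ((j : ℂ) + (ν : ℂ))) * τ) /
      (1 - e2 (m * z + 2 * m * ((j : ℂ) + (ν : ℂ)) * τ))

/-- `G^{[m]}_{n,ν}(τ, z)`. -/
def Gfun (m : ℂ) (n ν : ℤ) (τ z : ℂ) : ℂ :=
  gfun m n ν τ * jtheta 1 (n : ℂ) m τ z +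
    (-1 : ℂ) ^ ν * e2 (-(m * (ν : ℂ) ^ 2) * τ) *
      jtheta (-1) ((ν : ℂ) + 1 / 2) (m + 1 / 2) τ 0 * hfun m n ν τ z

/-- `F^{[m](a,b)}_{n,ν}(τ, z)`. -/
def Ffun (m : ℂ) (a b n ν : ℤ) (τ z : ℂ) : ℂ :=
  e2 ((a : ℂ) * z / 2 + (a : ℂ) ^ 2 / (4 * m) * τ) *
    Gfun m n ν τ (z + (a : ℂ) * τ / m + (b : ℂ) / m)

/-- The coefficient `f_{j,k}` of Lemma 3.1:
`f_{j,k} = (−1)^j q^{(m+1/2)(j+s/(2m+1))² − k²/(4m)} e^{−2πijm(z₁−z₂)+πik(z₁−z₂)}`. -/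
def fcoef (m s τ z₁ z₂ : ℂ) (j k : ℤ) : ℂ :=
  (-1 : ℂ) ^ j *
    e2 (((m + 1 / 2) * ((j : ℂ) + s / (2 * m + 1)) ^ 2 - (k : ℂ) ^ 2 / (4 * m)) * τ +
      (-((j : ℂ) * m) + (k : ℂ) / 2) * (z₁ - z₂))

lemma e2_add (a b : ℂ) : e2 (a + b) = e2 a * e2 b := by
  simp [e2, mul_add, Complex.exp_add]

lemma summable_e2_quadratic (δ a b c : ℂ) (ha : 0 < a.im) :
    Summable (fun j : ℤ => e2 ((j:ℂ) * δ) * e2 (a * (j:ℂ)^2 + b * (j:ℂ) + c)) := by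
  have h : ∀ j : ℤ, e2 ((j:ℂ) * δ) * e2 (a * (j:ℂ)^2 + b * (j:ℂ) + c)
      = e2 c * jacobiTheta₂_term j (b + δ) (2 * a) := by
    intro j
    simp only [e2, jacobiTheta₂_term, ← Complex.exp_add]
    congr 1
    ring
  have h2 : 0 < (2 * a).im := by
    simp only [Complex.mul_im, Complex.re_ofNat, Complex.im_ofNat]
    nlinarith
  simpa only [h] using
    (((summable_jacobiTheta₂_term_iff (b + δ) (2 * a)).mpr h2).mul_left (e2 c))

lemma eps_pow {ε : ℂ} (hε : ε = 1 ∨ ε = -1) : ∃ δ : ℂ, ∀ j : ℤ, ε ^ j = e2 ((j:ℂ) * δ) := by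
  rcases hε with h | h
  · exact ⟨0, fun j => by simp [h, e2]⟩
  · refine ⟨1/2, fun j => ?_⟩
    rw [h, e2, show 2 * (Real.pi:ℂ) * Complex.I * ((j:ℂ) * (1/2))
        = (j:ℂ) * ((Real.pi:ℂ) * Complex.I) by ring,
      Complex.exp_int_mul, Complex.exp_pi_mul_I]

lemma summable_eps_quadratic {ε : ℂ} (hε : ε = 1 ∨ ε = -1) (a b c : ℂ) (ha : 0 < a.im) :
    Summable (fun j : ℤ => ε ^ j * e2 (a * (j:ℂ)^2 + b * (j:ℂ) + c)) := by
  obtain ⟨δ, hδ⟩ := eps_pow hε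
  simp_rw [hδ]
  exact summable_e2_quadratic δ a b c ha

lemma den_ne {τ z₁ : ℂ} (hz : ∀ a b : ℤ, z₁ ≠ (a : ℂ) + (b : ℂ) * τ) (j : ℤ) :
    1 - e2 (z₁ + (j:ℂ) * τ) ≠ 0 := by
  intro h
  have h1 : e2 (z₁ + (j:ℂ) * τ) = 1 := by linear_combination -h
  rw [e2, Complex.exp_eq_one_iff] at h1
  obtain ⟨k, hk⟩ := h1
  have h2π : (2 * (Real.pi:ℂ) * Complex.I) ≠ 0 := by
    simp [Real.pi_ne_zero, Complex.I_ne_zero]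
  have h3 : z₁ + (j:ℂ) * τ = (k:ℂ) := by
    apply mul_left_cancel₀ h2π
    linear_combination hk
  exact hz k (-j) (by push_cast; linear_combination h3)

lemma norm_e2 (w : ℂ) : ‖e2 w‖ = Real.exp (-(2 * Real.pi * w.im)) := by
  rw [e2, Complex.norm_exp]
  congr 1
  simp only [Complex.mul_re, Complex.mul_im, Complex.I_re, Complex.I_im,
    Complex.ofReal_re, Complex.ofReal_im, Complex.re_ofNat, Complex.im_ofNat]
  ring

lemma den_big (τ z₁ : ℂ) (hτ : 0 < τ.im) :
    ∀ᶠ j : ℤ in Filter.cofinite, (1:ℝ)/2 ≤ ‖1 - e2 (z₁ + (j:ℂ) * τ)‖ := by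
  have hnorm : ∀ j : ℤ, ‖e2 (z₁ + (j:ℂ) * τ)‖
      = Real.exp (-(2 * Real.pi) * z₁.im + (-(2 * Real.pi) * τ.im) * (j:ℝ)) := by
    intro j
    rw [norm_e2]
    congr 1
    simp [Complex.add_im, Complex.mul_im]
    ring
  have hc : (-(2 * Real.pi) * τ.im) < 0 := by nlinarith [Real.pi_pos]
  have hcastB : Filter.Tendsto (fun j : ℤ => (j:ℝ)) Filter.atBot Filter.atBot := by
    have h1 := (tendsto_intCast_atTop_atTop (R := ℝ)).comp
      (Filter.tendsto_neg_atBot_atTop (G := ℤ))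
    have h2 := (Filter.tendsto_neg_atTop_atBot (G := ℝ)).comp h1
    refine h2.congr fun j => ?_
    simp
  rw [Int.cofinite_eq, Filter.eventually_sup]
  constructor
  · have ht : Filter.Tendsto (fun j : ℤ => ‖e2 (z₁ + (j:ℂ) * τ)‖) Filter.atBot Filter.atTop := by
      simp only [hnorm]
      apply Real.tendsto_exp_atTop.comp
      apply Filter.tendsto_atTop_add_const_left
      exact hcastB.const_mul_atBot_of_neg hc
    filter_upwards [ht.eventually_ge_atTop (3/2)] with j hj
    have h5 := norm_sub_norm_le (e2 (z₁ + (j:ℂ)*τ)) (1:ℂ)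
    rw [norm_one] at h5
    rw [show (1:ℂ) - e2 (z₁ + (j:ℂ)*τ) = -(e2 (z₁ + (j:ℂ)*τ) - 1) by ring, norm_neg]
    linarith
  · have ht : Filter.Tendsto (fun j : ℤ => ‖e2 (z₁ + (j:ℂ) * τ)‖) Filter.atTop (nhds 0) := by
      simp only [hnorm]
      apply Real.tendsto_exp_atBot.comp
      apply Filter.tendsto_atBot_add_const_left
      exact (tendsto_intCast_atTop_atTop (R := ℝ)).const_mul_atTop_of_neg hc
    filter_upwards [ht.eventually_le_const (by norm_num : (0:ℝ) < 1/2)] with j hj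
    have h5 := norm_sub_norm_le (1:ℂ) (e2 (z₁ + (j:ℂ)*τ))
    rw [norm_one] at h5
    linarith

lemma summable_jtheta_term {ε : ℂ} (hε : ε = 1 ∨ ε = -1) (w m τ z : ℂ)
    (hmτ : 0 < (m * τ).im) :
    Summable (fun j : ℤ => ε ^ j * e2 (m * ((j:ℂ) + w) ^ 2 * τ + m * ((j:ℂ) + w) * z)) := by
  refine (summable_eps_quadratic hε (m * τ) (2 * m * w * τ + m * z)
    (m * w ^ 2 * τ + m * w * z) hmτ).congr fun j => ?_
  congr 2
  ring

lemma summable_phi_num {ε : ℂ} (hε : ε = 1 ∨ ε = -1) (m s τ z₁ z₂ : ℂ)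
    (hmτ : 0 < (m * τ).im) :
    Summable (fun j : ℤ => ε ^ j *
      e2 (m * (j:ℂ) * (z₁ + z₂) + s * z₁ + (m * (j:ℂ) ^ 2 + s * (j:ℂ)) * τ)) := by
  refine (summable_eps_quadratic hε (m * τ) (m * (z₁ + z₂) + s * τ) (s * z₁) hmτ).congr
    fun j => ?_
  congr 2
  ring

lemma summable_phi_term {ε : ℂ} (hε : ε = 1 ∨ ε = -1) (m s τ z₁ z₂ : ℂ)
    (hmτ : 0 < (m * τ).im) (hτ : 0 < τ.im)
    (hz : ∀ a b : ℤ, z₁ ≠ (a : ℂ) + (b : ℂ) * τ) :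
    Summable (fun j : ℤ => ε ^ j *
      e2 (m * (j:ℂ) * (z₁ + z₂) + s * z₁ + (m * (j:ℂ) ^ 2 + s * (j:ℂ)) * τ) /
        (1 - e2 (z₁ + (j:ℂ) * τ))) := by
  apply Summable.of_norm_bounded_eventually
    (g := fun j : ℤ => 2 * ‖ε ^ j *
      e2 (m * (j:ℂ) * (z₁ + z₂) + s * z₁ + (m * (j:ℂ) ^ 2 + s * (j:ℂ)) * τ)‖)
    ((summable_phi_num hε m s τ z₁ z₂ hmτ).norm.mul_left 2)
  filter_upwards [den_big τ z₁ hτ] with j hj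
  rw [norm_div]
  have h0 : (0:ℝ) < ‖1 - e2 (z₁ + (j:ℂ) * τ)‖ := by linarith
  rw [div_le_iff₀ h0]
  have h1 : (0:ℝ) ≤ ‖ε ^ j *
      e2 (m * (j:ℂ) * (z₁ + z₂) + s * z₁ + (m * (j:ℂ) ^ 2 + s * (j:ℂ)) * τ)‖ := norm_nonneg _
  nlinarith

lemma step (M : ℕ) (hM : 0 < M) (m : ℂ) (hm : m = (M : ℂ) / 2) (s τ z₁ z₂ ε : ℂ)
    (hτ : 0 < τ.im) (hz : ∀ a b : ℤ, z₁ ≠ (a : ℂ) + (b : ℂ) * τ) (hε : ε = 1 ∨ ε = -1) :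
    Phi1 ε m (s + 1) τ z₁ z₂ = Phi1 ε m s τ z₁ z₂ -
      e2 (s * (z₁ - z₂) / 2) * e2 (-(s ^ 2 / (4 * m)) * τ) * jtheta ε s m τ (z₁ + z₂) := by
  have hm0 : m ≠ 0 := by
    rw [hm]
    simp only [ne_eq, div_eq_zero_iff, Nat.cast_eq_zero, OfNat.ofNat_ne_zero, or_false]
    omega
  have hmτ : 0 < (m * τ).im := by
    have : m * τ = (((M:ℝ) / 2 : ℝ) : ℂ) * τ := by rw [hm]; push_cast; ring
    rw [this, Complex.im_ofReal_mul]
    have : (0:ℝ) < (M:ℝ) / 2 := by positivity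
    positivity
  set P := e2 (s * (z₁ - z₂) / 2) * e2 (-(s ^ 2 / (4 * m)) * τ) with hP
  have hsplit : ∀ j : ℤ,
      ε ^ j * e2 (m * (j:ℂ) * (z₁ + z₂) + s * z₁ + (m * (j:ℂ) ^ 2 + s * (j:ℂ)) * τ) /
        (1 - e2 (z₁ + (j:ℂ) * τ))
      = ε ^ j * e2 (m * (j:ℂ) * (z₁ + z₂) + (s + 1) * z₁ +
          (m * (j:ℂ) ^ 2 + (s + 1) * (j:ℂ)) * τ) / (1 - e2 (z₁ + (j:ℂ) * τ))
        + P * (ε ^ j * e2 (m * ((j:ℂ) + s / (2 * m)) ^ 2 * τ +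
            m * ((j:ℂ) + s / (2 * m)) * (z₁ + z₂))) := by
    intro j
    have hu : 1 - e2 (z₁ + (j:ℂ) * τ) ≠ 0 := den_ne hz j
    have hE : e2 (m * (j:ℂ) * (z₁ + z₂) + (s + 1) * z₁ + (m * (j:ℂ) ^ 2 + (s + 1) * (j:ℂ)) * τ)
        = e2 (m * (j:ℂ) * (z₁ + z₂) + s * z₁ + (m * (j:ℂ) ^ 2 + s * (j:ℂ)) * τ)
          * e2 (z₁ + (j:ℂ) * τ) := by
      rw [← e2_add]
      congr 1
      ring
    have hPθ : P * e2 (m * ((j:ℂ) + s / (2 * m)) ^ 2 * τ + m * ((j:ℂ) + s / (2 * m)) * (z₁ + z₂))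
        = e2 (m * (j:ℂ) * (z₁ + z₂) + s * z₁ + (m * (j:ℂ) ^ 2 + s * (j:ℂ)) * τ) := by
      rw [hP, ← e2_add, ← e2_add]
      congr 1
      field_simp
      ring
    have h2 : P * (ε ^ j * e2 (m * ((j:ℂ) + s / (2 * m)) ^ 2 * τ +
        m * ((j:ℂ) + s / (2 * m)) * (z₁ + z₂)))
        = ε ^ j * e2 (m * (j:ℂ) * (z₁ + z₂) + s * z₁ + (m * (j:ℂ) ^ 2 + s * (j:ℂ)) * τ) := by
      linear_combination ε ^ j * hPθ
    rw [hE, h2]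
    field_simp
    ring
  have hs1 : Summable (fun j : ℤ => ε ^ j * e2 (m * (j:ℂ) * (z₁ + z₂) + (s + 1) * z₁ +
      (m * (j:ℂ) ^ 2 + (s + 1) * (j:ℂ)) * τ) / (1 - e2 (z₁ + (j:ℂ) * τ))) :=
    summable_phi_term hε m (s + 1) τ z₁ z₂ hmτ hτ hz
  have hs2 : Summable (fun j : ℤ => P * (ε ^ j * e2 (m * ((j:ℂ) + s / (2 * m)) ^ 2 * τ +
      m * ((j:ℂ) + s / (2 * m)) * (z₁ + z₂)))) :=
    (summable_jtheta_term hε (s / (2 * m)) m τ (z₁ + z₂) hmτ).mul_left P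
  have key : Phi1 ε m s τ z₁ z₂ = Phi1 ε m (s + 1) τ z₁ z₂ + P * jtheta ε s m τ (z₁ + z₂) := by
    rw [Phi1, Phi1, jtheta, ← tsum_mul_left, tsum_congr hsplit, Summable.tsum_add hs1 hs2]
  rw [key]
  ring

theorem stmt_2 (M : ℕ) (hM : 0 < M) (m : ℂ) (hm : m = (M : ℂ) / 2)
    (S : ℤ) (s : ℂ) (hs : s = (S : ℂ) / 2) (n : ℕ) (hn : 0 < n)
    (τ : ℂ) (hτ : 0 < τ.im) (z₁ z₂ : ℂ)
    (hz : ∀ a b : ℤ, z₁ ≠ (a : ℂ) + (b : ℂ) * τ)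
    (ε : ℂ) (hε : ε = 1 ∨ ε = -1) :
    (Phi1 ε m (s + (n : ℂ)) τ z₁ z₂ =
      Phi1 ε m s τ z₁ z₂ -
        ∑ j ∈ Finset.range n,
          e2 ((s + (j : ℂ)) * (z₁ - z₂) / 2) * e2 (-((s + (j : ℂ)) ^ 2 / (4 * m)) * τ) *
            jtheta ε (s + (j : ℂ)) m τ (z₁ + z₂)) ∧
    (Phi1 ε m (s - (n : ℂ)) τ z₁ z₂ =
      Phi1 ε m s τ z₁ z₂ +
        ∑ j ∈ Finset.Icc 1 n,
          e2 ((s - (j : ℂ)) * (z₁ - z₂) / 2) * e2 (-((s - (j : ℂ)) ^ 2 / (4 * m)) * τ) *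
            jtheta ε (s - (j : ℂ)) m τ (z₁ + z₂)) := by

  clear hn
  constructor
  · induction n with
    | zero => simp
    | succ N ih =>
      have hcast : s + ((N + 1 : ℕ) : ℂ) = (s + (N : ℂ)) + 1 := by push_cast; ring
      rw [hcast, step M hM m hm (s + (N : ℂ)) τ z₁ z₂ ε hτ hz hε, ih,
        Finset.sum_range_succ]
      ring
  · induction n with
    | zero => simp
    | succ N ih =>
      have hstep := step M hM m hm (s - ((N + 1 : ℕ) : ℂ)) τ z₁ z₂ ε hτ hz hε
      have h1 : (s - ((N + 1 : ℕ) : ℂ)) + 1 = s - (N : ℂ) := by push_cast; ring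
      rw [h1] at hstep
      rw [Finset.sum_Icc_succ_top (by omega : 1 ≤ N + 1)]
      rw [ih] at hstep
      linear_combination -hstep
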